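/- Let (α_k)_{k≥0} be a sequence in the open unit disc, let Φ_k be the monic polynomials of the Szegő recursion, let (β_k)_{k≥1} be a sequence on the unit circle, and set Φ̃_k(z) = Φ_k(z; β_k). Let m > n ≥ 1. Then for any two distinct zeros z0, z1 of Φ̃_n, the open arc (z0, z1) contains at least one zero of Φ̃_m. -/

import Mathlib

open Polynomial

/-- The open arc on the unit circle from `z` to `w`, counterclockwise. -/
def oArc (z w : ℂ) : Set ℂ :=
  {ζ | ∃ s t : ℝ, 0 < t ∧ t < s ∧ s < 2 * Real.pi ∧
    w = z * Complex.exp (s * Complex.I) ∧ ζ = z * Complex.exp (t * Complex.I)}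

open Polynomial in
/-- The monic OPUC from the Szegő recursion with Verblunsky coefficients `α`:
`Φ_0 = 1`, `Φ_{n+1}(z) = z Φ_n(z) - conj(α_n) Φ_n^*(z)`, where
`Φ_n^*(z) = zⁿ conj(Φ_n(1/conj z))` is the reversed polynomial. -/
noncomputable def szego (α : ℕ → ℂ) : ℕ → Polynomial ℂ
  | 0 => 1
  | n + 1 => X * szego α n -
      Polynomial.C ((starRingEnd ℂ) (α n)) *
        Polynomial.reflect n ((szego α n).map (starRingEnd ℂ))

open Polynomial in
/-- The paraorthogonal polynomial `Φ_{n+1}(z;β) = z Φ_n(z) - conj(β) Φ_n^*(z)`. -/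
noncomputable def popuc (α : ℕ → ℂ) (β : ℂ) (n : ℕ) : Polynomial ℂ :=
  X * szego α n -
    Polynomial.C ((starRingEnd ℂ) β) *
      Polynomial.reflect n ((szego α n).map (starRingEnd ℂ))

namespace Aux

noncomputable def SS (α : ℕ → ℂ) (k : ℕ) : Polynomial ℂ :=
  Polynomial.reflect k ((szego α k).map (starRingEnd ℂ))

lemma reflect_reflect' (N : ℕ) (f : Polynomial ℂ) :
    Polynomial.reflect N (Polynomial.reflect N f) = f := by
  ext i
  simp [Polynomial.coeff_reflect, Polynomial.revAt_invol]

lemma reflect_sub' (N : ℕ) (f g : Polynomial ℂ) :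
    Polynomial.reflect N (f - g) = Polynomial.reflect N f - Polynomial.reflect N g := by
  ext i
  simp [Polynomial.coeff_reflect]

lemma map_conj_conj (p : Polynomial ℂ) :
    (p.map (starRingEnd ℂ)).map (starRingEnd ℂ) = p := by
  rw [Polynomial.map_map]
  have : (starRingEnd ℂ).comp (starRingEnd ℂ) = RingHom.id ℂ := by
    ext z; exact Complex.conj_conj z
  rw [this, Polynomial.map_id]

lemma natDegree_reflect_le {q : Polynomial ℂ} {k : ℕ} (h : q.natDegree ≤ k) :
    (Polynomial.reflect k q).natDegree ≤ k := by
  refine Polynomial.natDegree_le_iff_coeff_eq_zero.mpr fun i hi => ?_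
  rw [Polynomial.coeff_reflect]
  have hrev : Polynomial.revAt k i = i := Polynomial.revAt_eq_self_of_lt hi
  rw [hrev]
  exact Polynomial.coeff_eq_zero_of_natDegree_lt (lt_of_le_of_lt h hi)

lemma natDegree_szego_le (α : ℕ → ℂ) (k : ℕ) : (szego α k).natDegree ≤ k := by
  induction k with
  | zero => simp [szego]
  | succ k ih =>
    rw [szego]
    refine le_trans (Polynomial.natDegree_sub_le _ _) ?_
    have h1 : (X * szego α k).natDegree ≤ k + 1 := by
      refine le_trans (Polynomial.natDegree_mul_le) ?_
      have : (X : Polynomial ℂ).natDegree = 1 := Polynomial.natDegree_X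
      omega
    have h2 : (Polynomial.C ((starRingEnd ℂ) (α k)) *
        Polynomial.reflect k ((szego α k).map (starRingEnd ℂ))).natDegree ≤ k + 1 := by
      refine le_trans (Polynomial.natDegree_mul_le) ?_
      have : ((szego α k).map (starRingEnd ℂ)).natDegree ≤ k := by
        simpa [Polynomial.natDegree_map] using ih
      simpa using le_trans (natDegree_reflect_le this) (Nat.le_succ k)
    simp [h1, h2]

lemma reflect_one_X : Polynomial.reflect 1 (X : Polynomial ℂ) = 1 := by
  have := Polynomial.reflect_monomial 1 1 (R := ℂ)
  simpa using this

lemma reflect_X_mul {q : Polynomial ℂ} {k : ℕ} (h : q.natDegree ≤ k) :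
    Polynomial.reflect (k + 1) (X * q) = Polynomial.reflect k q := by
  have hX : (X : Polynomial ℂ).natDegree ≤ 1 := by simp
  have := Polynomial.reflect_mul (X : Polynomial ℂ) q hX h
  rw [add_comm 1 k] at this
  rw [this, reflect_one_X, one_mul]

lemma SS_succ (α : ℕ → ℂ) (k : ℕ) :
    SS α (k + 1) = SS α k - Polynomial.C (α k) * (X * szego α k) := by
  have hdeg : (szego α k).natDegree ≤ k := natDegree_szego_le α k
  have hdegc : ((szego α k).map (starRingEnd ℂ)).natDegree ≤ k := by
    simpa [Polynomial.natDegree_map] using hdeg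
  have hmap : (szego α (k + 1)).map (starRingEnd ℂ) =
      X * (szego α k).map (starRingEnd ℂ) -
        Polynomial.C (α k) * Polynomial.reflect k (szego α k) := by
    rw [szego]
    rw [Polynomial.map_sub, Polynomial.map_mul, Polynomial.map_X, Polynomial.map_mul,
      Polynomial.map_C, Complex.conj_conj, ← Polynomial.reflect_map, map_conj_conj]
  rw [SS, hmap, reflect_sub']
  congr 1
  · exact reflect_X_mul hdegc
  · rw [Polynomial.reflect_C_mul]
    congr 1
    have h1 : Polynomial.reflect (k + 1) (X * szego α k) = Polynomial.reflect k (szego α k) :=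
      reflect_X_mul hdeg
    calc Polynomial.reflect (k + 1) (Polynomial.reflect k (szego α k))
        = Polynomial.reflect (k + 1) (Polynomial.reflect (k + 1) (X * szego α k)) := by rw [h1]
      _ = X * szego α k := reflect_reflect' _ _

end Aux

namespace Aux2
open Aux Complex

lemma SS_zero (α : ℕ → ℂ) : SS α 0 = 1 := by
  simp [SS, szego]

lemma szego_eval_succ (α : ℕ → ℂ) (k : ℕ) (z : ℂ) :
    (szego α (k + 1)).eval z =
      z * (szego α k).eval z - (starRingEnd ℂ) (α k) * (SS α k).eval z := by
  conv_lhs => rw [szego]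
  simp [SS]

lemma SS_eval_succ (α : ℕ → ℂ) (k : ℕ) (z : ℂ) :
    (SS α (k + 1)).eval z = (SS α k).eval z - α k * (z * (szego α k).eval z) := by
  rw [SS_succ]
  simp

lemma mob {a w v : ℂ} (ha : ‖a‖ < 1) (h : ‖w‖ < ‖v‖) :
    ‖w - (starRingEnd ℂ) a * v‖ < ‖v - a * w‖ := by
  have key : Complex.normSq (v - a * w) - Complex.normSq (w - (starRingEnd ℂ) a * v)
      = (1 - Complex.normSq a) * (Complex.normSq v - Complex.normSq w) := by
    simp only [Complex.normSq_apply, Complex.sub_re, Complex.sub_im, Complex.mul_re,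
      Complex.mul_im, Complex.conj_re, Complex.conj_im]
    ring
  have h1 : Complex.normSq a < 1 := by
    rw [Complex.normSq_eq_norm_sq]
    nlinarith [norm_nonneg a]
  have h2 : Complex.normSq w < Complex.normSq v := by
    rw [Complex.normSq_eq_norm_sq, Complex.normSq_eq_norm_sq]
    nlinarith [norm_nonneg w, norm_nonneg v]
  have hpos : Complex.normSq (w - (starRingEnd ℂ) a * v) < Complex.normSq (v - a * w) := by
    nlinarith [Complex.normSq_nonneg a]
  rw [Complex.norm_def, Complex.norm_def]
  exact Real.sqrt_lt_sqrt (Complex.normSq_nonneg _) hpos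

lemma disc_lt (α : ℕ → ℂ) (hα : ∀ k, ‖α k‖ < 1) {z : ℂ} (hz : ‖z‖ < 1)
    (k : ℕ) : ‖z * (szego α k).eval z‖ < ‖(SS α k).eval z‖ := by
  induction k with
  | zero => simpa [szego, SS_zero] using hz
  | succ k ih =>
    rw [szego_eval_succ, SS_eval_succ]
    have key := mob (hα k) ih
    calc ‖z * (z * (szego α k).eval z - (starRingEnd ℂ) (α k) * (SS α k).eval z)‖
        = ‖z‖ * ‖z * (szego α k).eval z -
            (starRingEnd ℂ) (α k) * (SS α k).eval z‖ := by rw [norm_mul]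
      _ ≤ ‖z * (szego α k).eval z - (starRingEnd ℂ) (α k) * (SS α k).eval z‖ := by
          nlinarith [norm_nonneg (z * (szego α k).eval z -
            (starRingEnd ℂ) (α k) * (SS α k).eval z), norm_nonneg z]
      _ < ‖(SS α k).eval z - α k * (z * (szego α k).eval z)‖ := key

lemma ext_lt (α : ℕ → ℂ) (hα : ∀ k, ‖α k‖ < 1) {z : ℂ} (hz : 1 < ‖z‖)
    (k : ℕ) : ‖(SS α k).eval z‖ < ‖z * (szego α k).eval z‖ := by
  induction k with
  | zero => simpa [szego, SS_zero] using hz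
  | succ k ih =>
    rw [szego_eval_succ, SS_eval_succ]
    have ha' : ‖(starRingEnd ℂ) (α k)‖ < 1 := by
      simpa using hα k
    have key := mob ha' ih
    rw [Complex.conj_conj] at key
    calc ‖(SS α k).eval z - α k * (z * (szego α k).eval z)‖
        < ‖z * (szego α k).eval z - (starRingEnd ℂ) (α k) * (SS α k).eval z‖ := key
      _ ≤ ‖z‖ * ‖z * (szego α k).eval z -
            (starRingEnd ℂ) (α k) * (SS α k).eval z‖ := by
          nlinarith [norm_nonneg (z * (szego α k).eval z -
            (starRingEnd ℂ) (α k) * (SS α k).eval z)]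
      _ = ‖z * (z * (szego α k).eval z -
            (starRingEnd ℂ) (α k) * (SS α k).eval z)‖ := by rw [norm_mul]

end Aux2

namespace Aux3
open Aux Aux2 Complex

lemma popuc_eval (α : ℕ → ℂ) (B : ℂ) (k : ℕ) (z : ℂ) :
    (popuc α B k).eval z =
      z * (szego α k).eval z - (starRingEnd ℂ) B * (SS α k).eval z := by
  simp [popuc, SS]

lemma root_abs_one (α : ℕ → ℂ) (hα : ∀ k, ‖α k‖ < 1) {B : ℂ}
    (hB : ‖B‖ = 1) {k : ℕ} {z : ℂ} (hroot : (popuc α B k).IsRoot z) :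
    ‖z‖ = 1 := by
  have heq : z * (szego α k).eval z = (starRingEnd ℂ) B * (SS α k).eval z := by
    have := hroot
    rw [Polynomial.IsRoot, popuc_eval] at this
    linear_combination this
  have habs : ‖z * (szego α k).eval z‖ = ‖(SS α k).eval z‖ := by
    rw [heq, norm_mul]
    simp [hB]
  rcases lt_trichotomy (‖z‖) 1 with h | h | h
  · exact absurd habs (ne_of_lt (disc_lt α hα h k))
  · exact h
  · exact absurd habs.symm (ne_of_lt (ext_lt α hα h k))

end Aux3

namespace Aux4
open Complex

noncomputable def hh (a : ℂ) (x : ℝ) : ℝ :=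
  x - 2 * Complex.arg (1 - a * Complex.exp (x * Complex.I))

lemma abs_exp_real_mul_I (x : ℝ) : ‖Complex.exp (x * Complex.I)‖ = 1 :=
  Complex.norm_exp_ofReal_mul_I x

lemma cRe_pos {a : ℂ} (ha : ‖a‖ < 1) (x : ℝ) :
    0 < (1 - a * Complex.exp (x * Complex.I)).re := by
  have h1 : ‖a * Complex.exp (x * Complex.I)‖ < 1 := by
    rw [norm_mul, abs_exp_real_mul_I, mul_one]; exact ha
  have h2 : (a * Complex.exp (x * Complex.I)).re ≤
      ‖a * Complex.exp (x * Complex.I)‖ := Complex.re_le_norm _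
  have h3 : (1 - a * Complex.exp (x * Complex.I)).re
      = 1 - (a * Complex.exp (x * Complex.I)).re := by simp
  linarith

lemma c_ne_zero {a : ℂ} (ha : ‖a‖ < 1) (x : ℝ) :
    1 - a * Complex.exp (x * Complex.I) ≠ 0 := by
  intro h
  have := cRe_pos ha x
  rw [h] at this
  simp at this

lemma conj_exp_real_mul_I (x : ℝ) :
    (starRingEnd ℂ) (Complex.exp (x * Complex.I)) = Complex.exp ((-x : ℝ) * Complex.I) := by
  rw [← Complex.exp_conj]
  congr 1
  rw [map_mul, Complex.conj_ofReal, Complex.conj_I]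
  push_cast
  ring

lemma exp_neg_two_arg (c : ℂ) :
    Complex.exp ((-(2 * Complex.arg c) : ℝ) * Complex.I) * c = (starRingEnd ℂ) c := by
  set φ := Complex.arg c with hφ
  set r := ‖c‖ with hr
  have h1 : (r : ℂ) * Complex.exp (φ * Complex.I) = c := Complex.norm_mul_exp_arg_mul_I c
  rw [← h1, map_mul, conj_exp_real_mul_I]
  have : (starRingEnd ℂ) (r : ℂ) = (r : ℂ) := Complex.conj_ofReal r
  rw [this, ← mul_assoc, mul_comm (Complex.exp ((-(2*φ) : ℝ) * Complex.I)) ((r : ℂ)),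
    mul_assoc, ← Complex.exp_add]
  congr 2
  push_cast
  ring

lemma hh_exp {a : ℂ} (ha : ‖a‖ < 1) (x : ℝ) :
    Complex.exp ((hh a x : ℝ) * Complex.I) * (1 - a * Complex.exp (x * Complex.I)) =
      Complex.exp (x * Complex.I) - (starRingEnd ℂ) a := by
  set c := 1 - a * Complex.exp (x * Complex.I) with hc
  have hsplit : Complex.exp ((hh a x : ℝ) * Complex.I) =
      Complex.exp (x * Complex.I) * Complex.exp ((-(2 * Complex.arg c) : ℝ) * Complex.I) := by
    rw [← Complex.exp_add]
    congr 1
    push_cast [hh]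
    ring
  rw [hsplit, mul_assoc, exp_neg_two_arg c]
  have hconj : (starRingEnd ℂ) c =
      1 - (starRingEnd ℂ) a * Complex.exp ((-x : ℝ) * Complex.I) := by
    rw [hc, map_sub, map_one, map_mul, conj_exp_real_mul_I]
  rw [hconj, mul_sub, mul_one]
  congr 1
  rw [mul_comm ((starRingEnd ℂ) a) _, ← mul_assoc, ← Complex.exp_add]
  have : (x : ℂ) * Complex.I + ((-x : ℝ) : ℂ) * Complex.I = 0 := by push_cast; ring
  rw [this, Complex.exp_zero, one_mul]

end Aux4

namespace Aux5
open Complex Aux4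

lemma hh_continuous {a : ℂ} (ha : ‖a‖ < 1) : Continuous (hh a) := by
  have hc : Continuous fun x : ℝ => 1 - a * Complex.exp (x * Complex.I) := by
    continuity
  have harg : Continuous fun x : ℝ => Complex.arg (1 - a * Complex.exp (x * Complex.I)) := by
    rw [continuous_iff_continuousAt]
    intro x
    exact ContinuousAt.comp (x := x) (Complex.continuousAt_arg (Complex.mem_slitPlane_iff.mpr
      (Or.inl (cRe_pos ha x)))) hc.continuousAt
  unfold hh
  exact continuous_id.sub (continuous_const.mul harg)

lemma exp_add_two_pi_int (x : ℝ) (j : ℤ) :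
    Complex.exp (((x + 2 * Real.pi * j : ℝ) : ℂ) * Complex.I) =
      Complex.exp ((x : ℂ) * Complex.I) := by
  push_cast
  rw [add_mul, Complex.exp_add]
  have : ((2 : ℂ) * Real.pi * (j : ℂ)) * Complex.I = (j : ℂ) * (2 * Real.pi * Complex.I) := by
    ring
  rw [this, Complex.exp_int_mul_two_pi_mul_I, mul_one]

lemma hh_add_int (a : ℂ) (x : ℝ) (j : ℤ) :
    hh a (x + 2 * Real.pi * j) = hh a x + 2 * Real.pi * j := by
  unfold hh
  rw [exp_add_two_pi_int]
  ring

lemma hh_injective {a : ℂ} (ha : ‖a‖ < 1) : Function.Injective (hh a) := by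
  intro x y hxy
  have ex := hh_exp ha x
  have ey := hh_exp ha y
  rw [hxy] at ex
  set u := Complex.exp ((hh a y : ℝ) * Complex.I) with hu
  set Ex := Complex.exp ((x : ℝ) * Complex.I) with hEx
  set Ey := Complex.exp ((y : ℝ) * Complex.I) with hEy
  have hfactor : (Ex - Ey) * (1 + u * a) = 0 := by
    have : u * (1 - a * Ex) - u * (1 - a * Ey) = (Ex - (starRingEnd ℂ) a) -
        (Ey - (starRingEnd ℂ) a) := by rw [ex, ey]
    linear_combination -this
  have hne : (1 : ℂ) + u * a ≠ 0 := by
    intro h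
    have habs : ‖u * a‖ < 1 := by
      rw [norm_mul, hu, abs_exp_real_mul_I, one_mul]
      exact ha
    have : u * a = -1 := by linear_combination h
    rw [this] at habs
    simp at habs
  have hExEy : Ex = Ey := by
    have := mul_eq_zero.mp hfactor
    rcases this with h | h
    · linear_combination h
    · exact absurd h hne
  obtain ⟨jj, hjj⟩ := Complex.exp_eq_exp_iff_exists_int.mp hExEy
  have hxy2 : x = y + 2 * Real.pi * jj := by
    have : ((x : ℂ) - (y + 2 * Real.pi * jj : ℝ)) * Complex.I = 0 := by
      push_cast
      push_cast at hjj
      linear_combination hjj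
    have h2 : ((x : ℂ) - ((y + 2 * Real.pi * jj : ℝ) : ℂ)) = 0 := by
      rcases mul_eq_zero.mp this with h | h
      · exact h
      · exact absurd h Complex.I_ne_zero
    have h3 : ((x : ℝ) : ℂ) = ((y + 2 * Real.pi * jj : ℝ) : ℂ) := by linear_combination h2
    exact_mod_cast h3
  have : hh a x = hh a y + 2 * Real.pi * jj := by
    rw [hxy2, hh_add_int]
  rw [hxy] at this
  have hj0 : (jj : ℝ) = 0 := by
    have hpi := Real.pi_pos
    nlinarith
  rw [hxy2, hj0]
  ring

lemma hh_strictMono {a : ℂ} (ha : ‖a‖ < 1) : StrictMono (hh a) := by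
  rcases Continuous.strictMono_of_inj (hh_continuous ha) (hh_injective ha) with h | h
  · exact h
  · exfalso
    have h1 : hh a (0 + 2 * Real.pi * (1 : ℤ)) = hh a 0 + 2 * Real.pi * (1 : ℤ) :=
      hh_add_int a 0 1
    have h2 : hh a (0 + 2 * Real.pi * (1 : ℤ)) < hh a 0 := by
      apply h
      have := Real.pi_pos
      norm_num
      linarith
    push_cast at h1 h2
    have := Real.pi_pos
    linarith

end Aux5

namespace Aux6
open Complex Aux Aux2 Aux3 Aux4 Aux5

noncomputable def eta (α : ℕ → ℂ) : ℕ → ℝ → ℝ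
  | 0 => fun θ => θ
  | k + 1 => fun θ => θ + hh (α k) (eta α k θ)

lemma eta_spec (α : ℕ → ℂ) (hα : ∀ k, ‖α k‖ < 1) (k : ℕ) (θ : ℝ) :
    (SS α k).eval (Complex.exp (θ * Complex.I)) ≠ 0 ∧
    Complex.exp (θ * Complex.I) * (szego α k).eval (Complex.exp (θ * Complex.I)) =
      Complex.exp ((eta α k θ : ℝ) * Complex.I) *
        (SS α k).eval (Complex.exp (θ * Complex.I)) := by
  induction k with
  | zero =>
    constructor
    · simp [SS_zero]
    · simp [szego, SS_zero, eta]
  | succ k ih =>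
    obtain ⟨hS, hE⟩ := ih
    set z := Complex.exp (θ * Complex.I) with hz
    set E := Complex.exp ((eta α k θ : ℝ) * Complex.I) with hEdef
    set S := (SS α k).eval z with hSdef
    have habsE : ‖E‖ = 1 := abs_exp_real_mul_I _
    have hone : (1 : ℂ) - α k * E ≠ 0 := by
      intro h
      have : ‖α k * E‖ < 1 := by
        rw [norm_mul, habsE, mul_one]; exact hα k
      have h2 : α k * E = 1 := by linear_combination -h
      rw [h2] at this
      simp at this
    have hSnew : (SS α (k + 1)).eval z = S * (1 - α k * E) := by
      rw [SS_eval_succ, hE]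
      ring
    have hhexp := hh_exp (hα k) (eta α k θ)
    constructor
    · rw [hSnew]
      exact mul_ne_zero hS hone
    · rw [hSnew, szego_eval_succ, hE]
      show z * (E * S - (starRingEnd ℂ) (α k) * S) =
        Complex.exp ((eta α (k + 1) θ : ℝ) * Complex.I) * (S * (1 - α k * E))
      have hsplit : Complex.exp ((eta α (k + 1) θ : ℝ) * Complex.I) =
          z * Complex.exp ((hh (α k) (eta α k θ) : ℝ) * Complex.I) := by
        rw [hz, ← Complex.exp_add]
        congr 1
        have heta : eta α (k + 1) θ = θ + hh (α k) (eta α k θ) := rfl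
        rw [heta]
        push_cast
        ring
      rw [hsplit]
      calc z * (E * S - (starRingEnd ℂ) (α k) * S) = z * ((E - (starRingEnd ℂ) (α k)) * S) := by
            ring
        _ = z * ((Complex.exp ((hh (α k) (eta α k θ) : ℝ) * Complex.I) * (1 - α k * E)) * S) := by
            rw [hhexp]
        _ = z * Complex.exp ((hh (α k) (eta α k θ) : ℝ) * Complex.I) * (S * (1 - α k * E)) := by
            ring

lemma eta_continuous (α : ℕ → ℂ) (hα : ∀ k, ‖α k‖ < 1) (k : ℕ) :
    Continuous (eta α k) := by
  induction k with
  | zero => exact continuous_id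
  | succ k ih => exact continuous_id.add ((hh_continuous (hα k)).comp ih)

lemma eta_strictMono (α : ℕ → ℂ) (hα : ∀ k, ‖α k‖ < 1) (k : ℕ) :
    StrictMono (eta α k) := by
  induction k with
  | zero => exact strictMono_id
  | succ k ih => exact StrictMono.add strictMono_id ((hh_strictMono (hα k)).comp ih)

lemma eta_step (α : ℕ → ℂ) (hα : ∀ k, ‖α k‖ < 1) {θ0 θ1 : ℝ} (k : ℕ)
    (h : eta α k θ0 + 2 * Real.pi ≤ eta α k θ1) :
    eta α (k + 1) θ0 + 2 * Real.pi + (θ1 - θ0) ≤ eta α (k + 1) θ1 := by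
  have hmono := (hh_strictMono (hα k)).monotone
  have h1 : hh (α k) (eta α k θ0 + 2 * Real.pi) ≤ hh (α k) (eta α k θ1) := hmono h
  have h2 : hh (α k) (eta α k θ0 + 2 * Real.pi) = hh (α k) (eta α k θ0) + 2 * Real.pi := by
    have := hh_add_int (α k) (eta α k θ0) 1
    push_cast at this
    convert this using 2 <;> ring
  show θ0 + hh (α k) (eta α k θ0) + 2 * Real.pi + (θ1 - θ0) ≤ θ1 + hh (α k) (eta α k θ1)
  linarith

lemma eta_gap (α : ℕ → ℂ) (hα : ∀ k, ‖α k‖ < 1) {θ0 θ1 : ℝ} (hθ : θ0 < θ1) (k : ℕ)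
    (h : eta α k θ0 + 2 * Real.pi ≤ eta α k θ1) (d : ℕ) :
    eta α (k + d) θ0 + 2 * Real.pi ≤ eta α (k + d) θ1 := by
  induction d with
  | zero => exact h
  | succ d ih =>
    have := eta_step α hα (k + d) ih
    have h2 : (0:ℝ) < θ1 - θ0 := by linarith
    calc eta α (k + (d+1)) θ0 + 2 * Real.pi
        ≤ eta α (k + d + 1) θ0 + 2 * Real.pi + (θ1 - θ0) := by
          rw [show k + (d+1) = k + d + 1 from rfl]; linarith
      _ ≤ eta α (k + d + 1) θ1 := this
      _ = eta α (k + (d+1)) θ1 := rfl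

lemma popuc_root_iff (α : ℕ → ℂ) (hα : ∀ k, ‖α k‖ < 1) (B : ℂ) (k : ℕ) (θ : ℝ) :
    (popuc α B k).IsRoot (Complex.exp (θ * Complex.I)) ↔
      Complex.exp ((eta α k θ : ℝ) * Complex.I) = (starRingEnd ℂ) B := by
  obtain ⟨hS, hE⟩ := eta_spec α hα k θ
  rw [Polynomial.IsRoot, popuc_eval, hE]
  constructor
  · intro h
    have : (Complex.exp ((eta α k θ : ℝ) * Complex.I) - (starRingEnd ℂ) B) *
        (SS α k).eval (Complex.exp (θ * Complex.I)) = 0 := by linear_combination h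
    rcases mul_eq_zero.mp this with h2 | h2
    · linear_combination h2
    · exact absurd h2 hS
  · intro h
    rw [h]
    ring

end Aux6

namespace Aux7
open Complex

lemma exp_real_eq {x y : ℝ}
    (h : Complex.exp ((x : ℝ) * Complex.I) = Complex.exp ((y : ℝ) * Complex.I)) :
    ∃ j : ℤ, x = y + 2 * Real.pi * j := by
  obtain ⟨jj, hjj⟩ := Complex.exp_eq_exp_iff_exists_int.mp h
  refine ⟨jj, ?_⟩
  have h1 : ((x : ℂ) - ((y + 2 * Real.pi * jj : ℝ) : ℂ)) * Complex.I = 0 := by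
    push_cast
    linear_combination hjj
  have h2 : ((x : ℝ) : ℂ) = ((y + 2 * Real.pi * jj : ℝ) : ℂ) := by
    rcases mul_eq_zero.mp h1 with h | h
    · linear_combination h
    · exact absurd h Complex.I_ne_zero
  exact_mod_cast h2

end Aux7

/-- **Theorem 3.4**. For `m > n`, strictly between any pair of distinct zeros of
`Φ̃_n = Φ_n(·;β_n)` there is a zero of `Φ̃_m = Φ_m(·;β_m)`. -/
theorem popuc_zero_between_zeros
    (α : ℕ → ℂ) (hα : ∀ k, ‖α k‖ < 1)
    (β : ℕ → ℂ) (hβ : ∀ k, 1 ≤ k → ‖β k‖ = 1)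
    (m n : ℕ) (hn : 1 ≤ n) (hmn : n < m)
    (z0 z1 : ℂ) (hne : z0 ≠ z1)
    (h0 : (popuc α (β n) (n - 1)).IsRoot z0)
    (h1 : (popuc α (β n) (n - 1)).IsRoot z1) :
    ∃ z ∈ oArc z0 z1, (popuc α (β m) (m - 1)).IsRoot z := by
  have hpi := Real.pi_pos
  have hβn : ‖β n‖ = 1 := hβ n hn
  have hβm : ‖β m‖ = 1 := hβ m (hn.trans hmn.le)
  have habs0 : ‖z0‖ = 1 := Aux3.root_abs_one α hα hβn h0
  have habs1 : ‖z1‖ = 1 := Aux3.root_abs_one α hα hβn h1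
  have hz0ne : z0 ≠ 0 := by
    intro h; rw [h] at habs0; simp at habs0
  set θ0 := Complex.arg z0 with hθ0def
  have hz0 : z0 = Complex.exp ((θ0 : ℝ) * Complex.I) := by
    conv_lhs => rw [← Complex.norm_mul_exp_arg_mul_I z0]
    rw [habs0, Complex.ofReal_one, one_mul]
  set w := z1 / z0 with hwdef
  have habsw : ‖w‖ = 1 := by
    rw [hwdef, norm_div, habs0, habs1]; norm_num
  have hwne1 : w ≠ 1 := by
    intro h
    apply hne
    have : z1 = z0 := by
      field_simp [hwdef] at h
      linear_combination z0 * h - z1 * mul_inv_cancel₀ hz0ne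
    exact this.symm
  set s0 := Complex.arg w with hs0def
  have hws : w = Complex.exp ((s0 : ℝ) * Complex.I) := by
    conv_lhs => rw [← Complex.norm_mul_exp_arg_mul_I w]
    rw [habsw, Complex.ofReal_one, one_mul]
  have hs0ne : s0 ≠ 0 := by
    intro h
    apply hwne1
    rw [hws, h]
    simp
  set s := if 0 < s0 then s0 else s0 + 2 * Real.pi with hsdef
  have hspos : 0 < s := by
    rw [hsdef]
    split_ifs with h
    · exact h
    · push_neg at h
      have := Complex.neg_pi_lt_arg w
      rw [← hs0def] at this
      linarith
  have hslt : s < 2 * Real.pi := by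
    rw [hsdef]
    split_ifs with h
    · have := Complex.arg_le_pi w
      rw [← hs0def] at this
      linarith
    · push_neg at h
      have hlt : s0 < 0 := lt_of_le_of_ne h hs0ne
      linarith
  have hexps : Complex.exp ((s : ℝ) * Complex.I) = w := by
    rw [hsdef]
    split_ifs with h
    · exact hws.symm
    · rw [show ((s0 + 2 * Real.pi : ℝ) : ℂ) * Complex.I
        = (s0 : ℝ) * Complex.I + (1 : ℤ) * (2 * Real.pi * Complex.I) from by push_cast; ring,
        Complex.exp_add, Complex.exp_int_mul_two_pi_mul_I, mul_one]
      exact hws.symm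
  set θ1 := θ0 + s with hθ1def
  have hθ01 : θ0 < θ1 := by rw [hθ1def]; linarith
  have hz1 : z1 = Complex.exp ((θ1 : ℝ) * Complex.I) := by
    rw [hθ1def, show ((θ0 + s : ℝ) : ℂ) * Complex.I
      = (θ0 : ℝ) * Complex.I + (s : ℝ) * Complex.I from by push_cast; ring,
      Complex.exp_add, ← hz0, hexps, hwdef]
    field_simp
  have e0 : Complex.exp ((Aux6.eta α (n - 1) θ0 : ℝ) * Complex.I) = (starRingEnd ℂ) (β n) := by
    rw [← Aux6.popuc_root_iff α hα, ← hz0]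
    exact h0
  have e1 : Complex.exp ((Aux6.eta α (n - 1) θ1 : ℝ) * Complex.I) = (starRingEnd ℂ) (β n) := by
    rw [← Aux6.popuc_root_iff α hα, ← hz1]
    exact h1
  obtain ⟨jj, hjj⟩ := Aux7.exp_real_eq (e1.trans e0.symm)
  have hlt : Aux6.eta α (n - 1) θ0 < Aux6.eta α (n - 1) θ1 :=
    Aux6.eta_strictMono α hα (n - 1) hθ01
  have hj1 : 1 ≤ jj := by
    by_contra h
    push_neg at h
    have h2 : jj ≤ 0 := by omega
    have h3 : (jj : ℝ) ≤ 0 := by exact_mod_cast h2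
    nlinarith
  have hge : Aux6.eta α (n - 1) θ0 + 2 * Real.pi ≤ Aux6.eta α (n - 1) θ1 := by
    have h3 : (1 : ℝ) ≤ (jj : ℝ) := by exact_mod_cast hj1
    nlinarith
  obtain ⟨d, hd⟩ : ∃ d, m - 1 = (n - 1) + d + 1 := ⟨m - n - 1, by omega⟩
  have hge2 := Aux6.eta_gap α hα hθ01 (n - 1) hge d
  have hstep := Aux6.eta_step α hα ((n - 1) + d) hge2
  have hstrict : Aux6.eta α (m - 1) θ0 + 2 * Real.pi < Aux6.eta α (m - 1) θ1 := by
    rw [hd]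
    linarith
  set c := Complex.arg ((starRingEnd ℂ) (β m)) with hcdef
  have hcexp : Complex.exp ((c : ℝ) * Complex.I) = (starRingEnd ℂ) (β m) := by
    conv_rhs => rw [← Complex.norm_mul_exp_arg_mul_I ((starRingEnd ℂ) (β m))]
    rw [Complex.norm_conj, hβm, Complex.ofReal_one, one_mul]
  set x := (Aux6.eta α (m - 1) θ0 - c) / (2 * Real.pi) with hxdef
  set j0 : ℤ := ⌊x⌋ + 1 with hj0def
  set g := c + 2 * Real.pi * (j0 : ℝ) with hgdef
  have hxval : c + 2 * Real.pi * x = Aux6.eta α (m - 1) θ0 := by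
    rw [hxdef]
    field_simp
    ring
  have hg1 : Aux6.eta α (m - 1) θ0 < g := by
    have hfl := Int.lt_floor_add_one x
    rw [hgdef, hj0def]
    push_cast
    nlinarith
  have hg2 : g < Aux6.eta α (m - 1) θ1 := by
    have hfl := Int.floor_le x
    rw [hgdef, hj0def]
    push_cast
    nlinarith
  have hivt := intermediate_value_Ioo (le_of_lt hθ01)
    (Aux6.eta_continuous α hα (m - 1)).continuousOn
  obtain ⟨θs, hθsmem, hfθs⟩ := hivt ⟨hg1, hg2⟩
  refine ⟨Complex.exp ((θs : ℝ) * Complex.I), ⟨s, θs - θ0, ?_, ?_, hslt, ?_, ?_⟩, ?_⟩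
  · linarith [hθsmem.1]
  · have := hθsmem.2
    rw [hθ1def] at this
    linarith
  · rw [hz1, hz0, ← Complex.exp_add, hθ1def]
    congr 1
    push_cast
    ring
  · rw [hz0, ← Complex.exp_add]
    congr 1
    push_cast
    ring
  · rw [Aux6.popuc_root_iff α hα, hfθs, hgdef,
      show ((c + 2 * Real.pi * (j0 : ℝ) : ℝ) : ℂ) * Complex.I
        = (c : ℝ) * Complex.I + (j0 : ℂ) * (2 * Real.pi * Complex.I) from by push_cast; ring,
      Complex.exp_add, Complex.exp_int_mul_two_pi_mul_I, mul_one, hcexp]
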